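/- Let c_max > 0, let F : ℝ → ℝ be continuous and nondecreasing on [0, c_max], concave on [0, c_max], with F(0) = 0 and F(c_max) = 1, and let B, V₁, V₂ > 0 be constants with B·(V₁ + V₂) ≤ c_max. Then there exists a unique c* ∈ (0, c_max] satisfying the equilibrium equation B·(V₁·F(c*) + V₂) = c*. -/

import Mathlib

/-- Theorem 1 (analytic core): existence and uniqueness of the non-degenerate
effort-exertion threshold `c*` solving the equilibrium equation
`B * (V₁ * F c* + V₂) = c*`. -/
theorem stmt0 (cmax B V₁ V₂ : ℝ) (F : ℝ → ℝ)
    (hcmax : 0 < cmax)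
    (hFcont : ContinuousOn F (Set.Icc 0 cmax))
    (hFmono : MonotoneOn F (Set.Icc 0 cmax))
    (hFconc : ConcaveOn ℝ (Set.Icc 0 cmax) F)
    (hF0 : F 0 = 0) (hF1 : F cmax = 1)
    (hB : 0 < B) (hV₁ : 0 < V₁) (hV₂ : 0 < V₂)
    (hle : B * (V₁ + V₂) ≤ cmax) :
    ∃! c : ℝ, c ∈ Set.Ioc 0 cmax ∧ B * (V₁ * F c + V₂) = c := by
  -- uniqueness helper: no two distinct roots
  have key : ∀ a b : ℝ, a ∈ Set.Ioc 0 cmax → b ∈ Set.Ioc 0 cmax →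
      B * (V₁ * F a + V₂) = a → B * (V₁ * F b + V₂) = b → a < b → False := by
    intro a b ha hb hea heb hab
    have hb0 : 0 < b := hb.1
    set t : ℝ := a / b with ht
    have ht0 : 0 < t := div_pos ha.1 hb0
    have ht1 : t < 1 := (div_lt_one hb0).mpr hab
    have hmem0 : (0 : ℝ) ∈ Set.Icc 0 cmax := ⟨le_rfl, hcmax.le⟩
    have hmemb : b ∈ Set.Icc 0 cmax := ⟨hb0.le, hb.2⟩
    have hconc := hFconc.2 hmemb hmem0 ht0.le (by linarith : (0:ℝ) ≤ 1 - t)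
      (by ring)
    have hcomb : t • b + (1 - t) • (0:ℝ) = a := by
      simp [ht, smul_eq_mul]
      field_simp
    rw [hcomb] at hconc
    have hFa : t * F b ≤ F a := by
      simpa [hF0, smul_eq_mul] using hconc
    -- a = B V₁ F a + B V₂ ≥ t (B V₁ F b) + B V₂ = t (b - B V₂) + B V₂
    have hFb : B * V₁ * F b = b - B * V₂ := by linarith [heb]
    have h1 : t * (B * V₁ * F b) + B * V₂ ≤ a := by
      nlinarith [mul_le_mul_of_nonneg_left hFa (mul_pos hB hV₁).le, hea]
    rw [hFb] at h1
    have hta : t * b = a := by rw [ht]; exact div_mul_cancel₀ a hb0.ne'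
    nlinarith [h1, hta, mul_pos hB hV₂]
  -- existence via IVT
  set g : ℝ → ℝ := fun c => c - B * (V₁ * F c + V₂) with hg
  have hgcont : ContinuousOn g (Set.Icc 0 cmax) :=
    continuousOn_id.sub (continuousOn_const.mul
      ((continuousOn_const.mul hFcont).add continuousOn_const))
  have hg0 : g 0 < 0 := by
    simp [hg, hF0]
    positivity
  have hgc : 0 ≤ g cmax := by
    simp [hg, hF1]
    linarith
  have h0mem : (0:ℝ) ∈ Set.Icc (g 0) (g cmax) := ⟨hg0.le, hgc⟩
  obtain ⟨c, hcmem, hgc0⟩ := intermediate_value_Icc hcmax.le hgcont h0mem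
  have hceq : B * (V₁ * F c + V₂) = c := by
    have h2 : c - B * (V₁ * F c + V₂) = 0 := hgc0
    linarith
  have hcpos : 0 < c := by
    rcases lt_or_eq_of_le hcmem.1 with h | h
    · exact h
    · exfalso; rw [← h] at hgc0; exact hg0.ne hgc0
  refine ⟨c, ⟨⟨hcpos, hcmem.2⟩, hceq⟩, ?_⟩
  rintro y ⟨hy, hey⟩
  by_contra hne
  rcases lt_or_gt_of_ne hne with h | h
  · exact key y c hy ⟨hcpos, hcmem.2⟩ hey hceq h
  · exact key c y ⟨hcpos, hcmem.2⟩ hy hceq hey h
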